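/- arXiv:1805.08637 — 4 statements merged into one kernel-verified Lean document; each statement's English description precedes it below -/
import Mathlib

section
/- Median trick: Let k be an odd natural number, let θ̂_1, …, θ̂_k be i.i.d. real-valued random variables, let I ⊆ ℝ be an interval, and suppose P(θ̂_1 ∈ I) ≥ 1 − α for some 0 < α < 1/2. Then the median θ̂ := median(θ̂_1, …, θ̂_k) satisfies P(θ̂ ∈ I) ≥ 1 − (1/2)·(4α(1−α))^{k/2}. -/
open MeasureTheory ProbabilityTheory

lemma countP_ofFn' {k:ℕ} (w : Fin k → ℝ) (p : ℝ → Bool) :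
    (List.ofFn w).countP p = (Finset.univ.filter (fun i => p (w i))).card := by
  simp [List.ofFn_eq_map, List.countP_map, List.countP_eq_length_filter,
    Finset.card_filter, Fin.univ_def, Finset.filter, List.filter_map, Function.comp_def]

lemma sorted_core' {l : List ℝ} (hs : l.Pairwise (· ≤ ·)) (p : ℝ → Bool)
    (hconn : ∀ a b x : ℝ, p a → p b → a ≤ x → x ≤ b → p x)
    {t : ℕ} (hlen : l.length = 2*t+1)
    (hc : t+1 ≤ l.countP p) : p (l.getD t 0) = true := by
  have ht' : t < l.length := by omega
  rw [List.getD_eq_getElem l 0 ht']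
  have hmono : ∀ i j (hi : i < l.length) (hj : j < l.length), i ≤ j → l[i] ≤ l[j] := by
    intro i j hi hj hij
    rcases eq_or_lt_of_le hij with h | h
    · subst h; rfl
    · exact List.pairwise_iff_getElem.mp hs i j hi hj h
  by_contra hx
  by_cases hex : ∃ a ∈ l, p a = true ∧ a ≤ l[t]
  · obtain ⟨a, hal, hpa, hax⟩ := hex
    have hdrop : (l.drop t).countP p = 0 := by
      rw [List.countP_eq_zero]
      intro y hy hpy
      obtain ⟨i, hi, hiy⟩ := List.mem_iff_getElem.mp hy
      rw [List.getElem_drop] at hiy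
      have hti : t + i < l.length := by simp [List.length_drop] at hi; omega
      have hle : l[t] ≤ y := hiy ▸ hmono t (t+i) ht' hti (by omega)
      exact hx (hconn a y _ hpa hpy hax hle)
    have hcc : l.countP p = (l.take t).countP p + (l.drop t).countP p := by
      conv_lhs => rw [← List.take_append_drop t l]
      exact List.countP_append
    have h1 : (l.take t).countP p ≤ t :=
      le_trans (List.countP_le_length (p := p)) (by simp [List.length_take, hlen])
    omega
  · push_neg at hex
    have htake : (l.take (t+1)).countP p = 0 := by
      rw [List.countP_eq_zero]
      intro y hy hpy
      obtain ⟨i, hi, hiy⟩ := List.mem_iff_getElem.mp hy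
      rw [List.getElem_take] at hiy
      have hi' : i < l.length := by simp [List.length_take] at hi; omega
      have hit : i ≤ t := by simp [List.length_take] at hi; omega
      have hle : y ≤ l[t] := hiy ▸ hmono i t hi' ht' hit
      exact absurd hle (not_le.mpr (hex y (hiy ▸ List.getElem_mem hi') hpy))
    have hcc : l.countP p = (l.take (t+1)).countP p + (l.drop (t+1)).countP p := by
      conv_lhs => rw [← List.take_append_drop (t+1) l]
      exact List.countP_append
    have h1 : (l.drop (t+1)).countP p ≤ t :=
      le_trans (List.countP_le_length (p := p)) (by simp [List.length_drop, hlen]; omega)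
    omega

/-- The median of `k` real values: the `((k+1)/2)`-th smallest among them
(for odd `k` this is the usual median). -/
noncomputable def median {k : ℕ} (v : Fin k → ℝ) : ℝ :=
  (List.insertionSort (· ≤ ·) (List.ofFn v)).getD ((k - 1) / 2) 0

lemma median_mem' {k t : ℕ} (hkt : k = 2*t+1) (v : Fin k → ℝ) {I : Set ℝ}
    [DecidablePred (· ∈ I)] (hI : I.OrdConnected)
    (hc : t+1 ≤ (Finset.univ.filter (fun i => v i ∈ I)).card) : median v ∈ I := by
  classical
  set p : ℝ → Bool := fun x => decide (x ∈ I) with hp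
  have hconn : ∀ a b x : ℝ, p a → p b → a ≤ x → x ≤ b → p x := by
    intro a b x ha hb hax hxb
    simp only [hp, decide_eq_true_eq] at *
    exact hI.out ha hb ⟨hax, hxb⟩
  set l := List.insertionSort (· ≤ ·) (List.ofFn v) with hl
  have hlen : l.length = 2*t+1 := by
    rw [hl, List.length_insertionSort, List.length_ofFn, hkt]
  have hcount : t+1 ≤ l.countP p := by
    rw [hl, (List.perm_insertionSort _ _).countP_eq, countP_ofFn']
    refine le_trans hc (le_of_eq ?_)
    congr 1
    apply Finset.filter_congr
    intro x _
    simp [hp]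
  have := sorted_core' (List.pairwise_insertionSort _ _) p hconn hlen hcount
  have hidx : (k-1)/2 = t := by omega
  rw [median, hidx, ← hl]
  simpa [hp] using this

/-- **Median trick** (Proposition 2.3): if `θ 1, …, θ k` are i.i.d. real random variables,
`I ⊆ ℝ` is an interval, and each `θ i` lies in `I` with probability at least `1 - α`
for some `0 < α < 1/2`, then for odd `k` the median of `θ 1, …, θ k` lies in `I`
with probability at least `1 - (1/2) * (4 * α * (1 - α)) ^ (k/2)`. -/
theorem median_trick
    {Ω : Type*} [MeasurableSpace Ω] (μ : Measure Ω) [IsProbabilityMeasure μ]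
    (k : ℕ) (hk : Odd k) (θ : Fin k → Ω → ℝ) (hmeas : ∀ i, Measurable (θ i))
    (hindep : iIndepFun θ μ)
    (hid : ∀ i j, IdentDistrib (θ i) (θ j) μ μ)
    (I : Set ℝ) (hI : I.OrdConnected)
    (α : ℝ) (hα0 : 0 < α) (hα : α < 1 / 2)
    (hconf : ∀ i, ENNReal.ofReal (1 - α) ≤ μ {ω | θ i ω ∈ I}) :
    ENNReal.ofReal (1 - (1 / 2) * (4 * α * (1 - α)) ^ ((k : ℝ) / 2))
      ≤ μ {ω | median (fun i => θ i ω) ∈ I} := by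
  classical
  obtain ⟨t, ht⟩ := hk
  have hkt : k = 2*t+1 := by omega
  have hImeas : MeasurableSet I := hI.measurableSet
  have hk0 : 0 < k := by omega
  set i₀ : Fin k := ⟨0, hk0⟩
  set pE : ENNReal := μ (θ i₀ ⁻¹' I) with hpEdef
  have hAi : ∀ i, μ (θ i ⁻¹' I) = pE := fun i => (hid i i₀).measure_mem_eq hImeas
  have hpE_ne : pE ≠ ⊤ := measure_ne_top μ _
  set pr : ℝ := pE.toReal with hprdef
  have hpE1 : pE ≤ 1 := prob_le_one
  have hpr_le1 : pr ≤ 1 := by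
    have := ENNReal.toReal_mono (by simp) hpE1
    simpa using this
  have hpr_ge : 1 - α ≤ pr := by
    have h := hconf i₀
    exact (ENNReal.ofReal_le_iff_le_toReal hpE_ne).mp h
  set qr : ℝ := 1 - pr with hqrdef
  have hqr0 : 0 ≤ qr := by simp [hqrdef]; linarith
  have hqrα : qr ≤ α := by simp [hqrdef]; linarith
  have hpr0 : 0 ≤ pr := by linarith
  have hqrpr : qr ≤ pr := by simp [hqrdef]; linarith
  -- pattern sets
  set pat : Ω → Finset (Fin k) := fun ω => Finset.univ.filter (fun i => θ i ω ∈ I) with hpat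
  set PT : Finset (Fin k) → Set Ω := fun T => ⋂ i, θ i ⁻¹' (if i ∈ T then I else Iᶜ) with hPT
  have hPT_eq : ∀ T, PT T = {ω | pat ω = T} := by
    intro T
    ext ω
    simp only [hPT, Set.mem_iInter, Set.mem_preimage, Set.mem_setOf_eq, Finset.ext_iff,
      hpat, Finset.mem_filter, Finset.mem_univ, true_and]
    refine forall_congr' (fun i => ?_)
    by_cases hi : i ∈ T <;> simp [hi]
  have hCmeas : ∀ (T : Finset (Fin k)) (i : Fin k), MeasurableSet (if i ∈ T then I else Iᶜ) := by
    intro T i; split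
    · exact hImeas
    · exact hImeas.compl
  have hPTmeas : ∀ T, MeasurableSet (PT T) :=
    fun T => MeasurableSet.iInter (fun i => (hmeas i) (hCmeas T i))
  have hPTval : ∀ T : Finset (Fin k), (μ (PT T)).toReal = pr ^ T.card * qr ^ (k - T.card) := by
    intro T
    have hprod := (iIndepFun_iff_measure_inter_preimage_eq_mul.mp hindep) Finset.univ
      (sets := fun i => if i ∈ T then I else Iᶜ) (fun i _ => hCmeas T i)
    have hbi : (⋂ i ∈ (Finset.univ : Finset (Fin k)), θ i ⁻¹' (if i ∈ T then I else Iᶜ)) = PT T := by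
      simp [hPT]
    rw [hbi] at hprod
    rw [hprod, ENNReal.toReal_prod]
    have hfac : ∀ i : Fin k, (μ (θ i ⁻¹' (if i ∈ T then I else Iᶜ))).toReal
        = if i ∈ T then pr else qr := by
      intro i
      by_cases hi : i ∈ T
      · simp [hi, hAi i, hprdef]
      · simp only [hi, if_false]
        rw [show θ i ⁻¹' Iᶜ = (θ i ⁻¹' I)ᶜ from rfl,
          prob_compl_eq_one_sub ((hmeas i) hImeas), hAi i,
          ENNReal.toReal_sub_of_le hpE1 (by simp)]
        simp [hqrdef, hprdef]
    rw [Finset.prod_congr rfl (fun i _ => hfac i)]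
    rw [← Finset.prod_filter_mul_prod_filter_not Finset.univ (· ∈ T)]
    have h1 : Finset.univ.filter (· ∈ T) = T := by simp
    have h2 : (Finset.univ.filter (fun i => ¬ i ∈ T)).card = k - T.card := by
      rw [Finset.filter_not, h1, Finset.card_sdiff_of_subset (Finset.subset_univ T)]
      simp
    have e1 : (∏ i ∈ Finset.univ.filter (· ∈ T), (if i ∈ T then pr else qr)) = pr ^ T.card := by
      rw [Finset.prod_congr rfl (fun i hi => if_pos (Finset.mem_filter.mp hi).2),
        Finset.prod_const, h1]
    have e2 : (∏ i ∈ Finset.univ.filter (fun i => ¬ i ∈ T), (if i ∈ T then pr else qr))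
        = qr ^ (k - T.card) := by
      rw [Finset.prod_congr rfl (fun i hi => if_neg (Finset.mem_filter.mp hi).2),
        Finset.prod_const, h2]
    rw [e1, e2]
  
  set 𝒯 : Finset (Finset (Fin k)) := Finset.univ.filter (fun T => T.card ≤ t) with hTT
  have hcard𝒯 : 𝒯.card = 4 ^ t := by
    have hbU : 𝒯 = (Finset.range (t+1)).biUnion (fun j => Finset.powersetCard j Finset.univ) := by
      ext T
      simp only [hTT, Finset.mem_filter, Finset.mem_univ, true_and, Finset.mem_biUnion,
        Finset.mem_range, Finset.mem_powersetCard, Nat.lt_succ_iff]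
      constructor
      · intro h; exact ⟨T.card, h, Finset.subset_univ T, rfl⟩
      · rintro ⟨j, hj, -, rfl⟩; exact hj
    rw [hbU, Finset.card_biUnion]
    · simp only [Finset.card_powersetCard, Finset.card_univ, Fintype.card_fin, hkt]
      exact Nat.sum_range_choose_halfway t
    · intro a _ b _ hab
      simp only [Function.onFun]
      rw [Finset.disjoint_left]
      intro T hTa hTb
      rw [Finset.mem_powersetCard] at hTa hTb
      exact hab (hTa.2 ▸ hTb.2)
  set E : Set Ω := ⋃ T ∈ 𝒯, PT T with hE
  have hEmeas : MeasurableSet E :=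
    MeasurableSet.biUnion (Finset.countable_toSet _) (fun T _ => hPTmeas T)
  have hmuE : μ E = ∑ T ∈ 𝒯, μ (PT T) := by
    refine measure_biUnion_finset ?_ (fun T _ => hPTmeas T)
    intro T hTa T' hTb hne
    simp only [Function.onFun]
    rw [Set.disjoint_left]
    intro ω h1 h2
    rw [hPT_eq] at h1 h2
    rw [Set.mem_setOf_eq] at h1 h2
    exact hne (h1 ▸ h2 ▸ rfl)
  have hEc_sub : Eᶜ ⊆ {ω | median (fun i => θ i ω) ∈ I} := by
    intro ω hω
    have hcard : t+1 ≤ (pat ω).card := by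
      by_contra hcon
      push_neg at hcon
      apply hω
      refine Set.mem_iUnion₂.mpr ⟨pat ω, ?_, ?_⟩
      · simp only [hTT, Finset.mem_filter, Finset.mem_univ, true_and]; omega
      · rw [hPT_eq]; exact rfl
    exact median_mem' hkt _ hI hcard
  have hsum_le : (μ E).toReal ≤ (4:ℝ)^t * (pr^t * qr^(t+1)) := by
    rw [hmuE, ENNReal.toReal_sum (fun T _ => measure_ne_top μ _)]
    have hterm : ∀ T ∈ 𝒯, (μ (PT T)).toReal ≤ pr^t * qr^(t+1) := by
      intro T hT
      rw [hPTval T]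
      simp only [hTT, Finset.mem_filter, Finset.mem_univ, true_and] at hT
      have hkc : k - T.card = (t+1) + (t - T.card) := by omega
      have hct : T.card + (t - T.card) = t := by omega
      rw [hkc, pow_add]
      calc pr ^ T.card * (qr ^ (t+1) * qr ^ (t - T.card))
          ≤ pr ^ T.card * (qr ^ (t+1) * pr ^ (t - T.card)) := by
            apply mul_le_mul_of_nonneg_left _ (pow_nonneg hpr0 _)
            exact mul_le_mul_of_nonneg_left (pow_le_pow_left₀ hqr0 hqrpr _) (pow_nonneg hqr0 _)
        _ = pr ^ (T.card + (t - T.card)) * qr ^ (t+1) := by rw [pow_add]; ring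
        _ = pr ^ t * qr ^ (t+1) := by rw [hct]
    calc ∑ T ∈ 𝒯, (μ (PT T)).toReal ≤ 𝒯.card • (pr^t * qr^(t+1)) :=
          Finset.sum_le_card_nsmul _ _ _ hterm
      _ = (4:ℝ)^t * (pr^t * qr^(t+1)) := by
          rw [hcard𝒯, nsmul_eq_mul]; push_cast; ring
  set x : ℝ := α * (1 - α) with hx
  have hx0 : 0 < x := by rw [hx]; nlinarith
  have hprqr : pr * qr ≤ x := by
    rw [hx]
    nlinarith [mul_nonneg (sub_nonneg.2 hqrα) (sub_nonneg.2 (show qr ≤ 1-α by linarith))]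
  have hqsx : qr ≤ Real.sqrt x := by
    have h1 : α ≤ Real.sqrt x := by
      rw [Real.le_sqrt hα0.le hx0.le, hx]; nlinarith
    linarith
  have hbound : (4:ℝ)^t * (pr^t * qr^(t+1)) ≤ (4:ℝ)^t * (x^t * Real.sqrt x) := by
    apply mul_le_mul_of_nonneg_left _ (by positivity)
    have h1 : pr^t * qr^(t+1) = (pr*qr)^t * qr := by rw [mul_pow, pow_succ]; ring
    rw [h1]
    exact mul_le_mul (pow_le_pow_left₀ (by positivity) hprqr t) hqsx hqr0 (by positivity)
  have hB : (1 / 2) * (4 * α * (1 - α)) ^ ((k : ℝ) / 2) = (4:ℝ)^t * (x^t * Real.sqrt x) := by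
    have h4x : (4:ℝ) * α * (1 - α) = 4 * x := by rw [hx]; ring
    have hk2 : (k : ℝ) / 2 = (t : ℝ) + 1/2 := by rw [hkt]; push_cast; ring
    rw [h4x, hk2, Real.rpow_add (by positivity), Real.rpow_natCast, ← Real.sqrt_eq_rpow,
      Real.sqrt_mul (by norm_num) x,
      show Real.sqrt 4 = 2 by rw [show (4:ℝ)=2^2 by norm_num, Real.sqrt_sq (by norm_num)],
      mul_pow]
    ring
  have hgood : μ Eᶜ ≤ μ {ω | median (fun i => θ i ω) ∈ I} := measure_mono hEc_sub
  refine le_trans ?_ hgood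
  apply ENNReal.ofReal_le_of_le_toReal
  rw [prob_compl_eq_one_sub hEmeas, ENNReal.toReal_sub_of_le prob_le_one (by simp)]
  simp only [ENNReal.toReal_one]
  rw [hB]
  linarith [le_trans hsum_le hbound]
end

section
/- Marcinkiewicz–Zygmund type inequality, case 1 < q ≤ 2: Let 1 < q ≤ 2, let Z ∈ L_q be a real random variable with E Z = 0, and let Z_1, …, Z_m be i.i.d. copies of Z. Then ‖(1/m)·Σ_{i=1}^m Z_i‖_q ≤ 2^{2/q − 1} · m^{−(1−1/q)} · ‖Z‖_q. -/
open MeasureTheory ProbabilityTheory ENNReal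


noncomputable def mzPsi (q x : ℝ) : ℝ := |x| ^ (q - 2) * x

lemma mzPsi_zero (q : ℝ) : mzPsi q 0 = 0 := by simp [mzPsi]

lemma mzPsi_neg (q x : ℝ) : mzPsi q (-x) = - mzPsi q x := by
  simp [mzPsi, abs_neg]

lemma mzPsi_nonneg_eq {q : ℝ} (hq : 1 < q) {x : ℝ} (hx : 0 ≤ x) :
    mzPsi q x = x ^ (q - 1) := by
  rcases eq_or_lt_of_le hx with h | h
  · simp [mzPsi, ← h, Real.zero_rpow (show q - 1 ≠ 0 by intro h'; linarith)]
  · have h2 : x ^ (q - 1) = x ^ (q - 2) * x := by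
      rw [show q - 1 = q - 2 + 1 by ring, Real.rpow_add h, Real.rpow_one]
    rw [mzPsi, abs_of_pos h, h2]

lemma abs_mzPsi {q : ℝ} (hq : 1 < q) (x : ℝ) : |mzPsi q x| = |x| ^ (q - 1) := by
  rcases eq_or_ne x 0 with rfl | hx
  · simp [mzPsi, Real.zero_rpow (show q - 1 ≠ 0 by intro h'; linarith)]
  · have h : 0 < |x| := abs_pos.mpr hx
    rw [mzPsi, abs_mul, abs_of_nonneg (Real.rpow_nonneg (abs_nonneg x) _),
      show q - 1 = q - 2 + 1 by ring, Real.rpow_add h, Real.rpow_one]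

lemma real_rpow_add_le_add_rpow {p x y : ℝ} (hx : 0 ≤ x) (hy : 0 ≤ y)
    (hp0 : 0 ≤ p) (hp1 : p ≤ 1) : (x + y) ^ p ≤ x ^ p + y ^ p := by
  have h := NNReal.rpow_add_le_add_rpow x.toNNReal y.toNNReal hp0 hp1
  have h' := NNReal.coe_le_coe.mpr h
  push_cast [NNReal.coe_rpow, Real.coe_toNNReal x hx, Real.coe_toNNReal y hy] at h'
  exact h'

lemma nnreal_add_rpow_le {p : ℝ} (hp0 : 0 < p) (hp1 : p ≤ 1) (a b : NNReal) :
    a ^ p + b ^ p ≤ 2 ^ (1 - p) * (a + b) ^ p := by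
  have hp : (1 : ℝ) ≤ 1 / p := by
    rw [le_div_iff₀ hp0, one_mul]; exact hp1
  have h := NNReal.rpow_add_le_mul_rpow_add_rpow (a ^ p) (b ^ p) hp
  rw [one_div] at h
  rw [NNReal.rpow_rpow_inv hp0.ne', NNReal.rpow_rpow_inv hp0.ne'] at h
  have h2 := NNReal.rpow_le_rpow h hp0.le
  rw [NNReal.rpow_inv_rpow hp0.ne', NNReal.mul_rpow, ← NNReal.rpow_mul] at h2
  rw [show (p⁻¹ - 1) * p = 1 - p by field_simp] at h2
  exact h2

lemma real_add_rpow_le {p x y : ℝ} (hx : 0 ≤ x) (hy : 0 ≤ y)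
    (hp0 : 0 < p) (hp1 : p ≤ 1) : x ^ p + y ^ p ≤ 2 ^ (1 - p) * (x + y) ^ p := by
  have h := nnreal_add_rpow_le hp0 hp1 x.toNNReal y.toNNReal
  have h' := NNReal.coe_le_coe.mpr h
  push_cast [NNReal.coe_rpow, Real.coe_toNNReal x hx, Real.coe_toNNReal y hy] at h'
  exact h'

lemma one_le_two_rpow {p : ℝ} (hp : 0 ≤ p) : (1 : ℝ) ≤ 2 ^ p :=
  Real.one_le_rpow one_le_two hp

lemma mzPsi_holder_aux {q : ℝ} (hq1 : 1 < q) (hq2 : q ≤ 2) {a b : ℝ} (hba : b ≤ a) :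
    |mzPsi q a - mzPsi q b| ≤ 2 ^ (2 - q) * |a - b| ^ (q - 1) := by
  have hp0 : (0:ℝ) < q - 1 := by linarith
  have hp1 : q - 1 ≤ 1 := by linarith
  have h2q : (2:ℝ) - q = 1 - (q - 1) := by ring
  have habs : |a - b| = a - b := abs_of_nonneg (by linarith)
  have case1 : ∀ u v : ℝ, 0 ≤ v → v ≤ u →
      |mzPsi q u - mzPsi q v| ≤ 2 ^ (2 - q) * |u - v| ^ (q - 1) := by
    intro u v hv hvu
    have hu : 0 ≤ u := le_trans hv hvu
    rw [mzPsi_nonneg_eq hq1 hu, mzPsi_nonneg_eq hq1 hv]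
    have hmono : v ^ (q-1) ≤ u ^ (q-1) := Real.rpow_le_rpow hv hvu hp0.le
    rw [abs_of_nonneg (by linarith), abs_of_nonneg (by linarith)]
    have hsub : u ^ (q-1) ≤ (u - v) ^ (q-1) + v ^ (q-1) := by
      have := real_rpow_add_le_add_rpow (x := u - v) (y := v) (by linarith) hv hp0.le hp1
      rw [sub_add_cancel] at this
      exact this
    calc u ^ (q-1) - v ^ (q-1) ≤ (u - v) ^ (q-1) := by linarith
    _ = 1 * (u - v) ^ (q-1) := (one_mul _).symm
    _ ≤ 2 ^ (2 - q) * (u - v) ^ (q-1) := by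
        apply mul_le_mul_of_nonneg_right _ (Real.rpow_nonneg (by linarith) _)
        rw [h2q]; exact one_le_two_rpow (by linarith)
  rcases le_or_gt 0 b with hb | hb
  · exact habs ▸ case1 a b hb hba
  · rcases le_or_gt 0 a with ha | ha
    · -- b < 0 ≤ a
      have hψb : mzPsi q b = -((-b) ^ (q-1)) := by
        rw [← mzPsi_nonneg_eq hq1 (by linarith : (0:ℝ) ≤ -b), ← mzPsi_neg, neg_neg]
      rw [mzPsi_nonneg_eq hq1 ha, hψb, sub_neg_eq_add, habs]
      have hnn : 0 ≤ a ^ (q-1) + (-b) ^ (q-1) :=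
        add_nonneg (Real.rpow_nonneg ha _) (Real.rpow_nonneg (by linarith) _)
      rw [abs_of_nonneg hnn]
      calc a ^ (q-1) + (-b) ^ (q-1) ≤ 2 ^ (1 - (q-1)) * (a + -b) ^ (q-1) :=
            real_add_rpow_le ha (by linarith) hp0 hp1
      _ = 2 ^ (2 - q) * (a - b) ^ (q-1) := by rw [h2q, ← sub_eq_add_neg]
    · -- b ≤ a < 0
      have := case1 (-b) (-a) (by linarith) (by linarith)
      rw [mzPsi_neg, mzPsi_neg] at this
      have e1 : -mzPsi q b - -mzPsi q a = mzPsi q a - mzPsi q b := by ring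
      have e2 : -b - -a = a - b := by ring
      rw [e1, e2] at this
      exact this

lemma mzPsi_holder {q : ℝ} (hq1 : 1 < q) (hq2 : q ≤ 2) (a b : ℝ) :
    |mzPsi q a - mzPsi q b| ≤ 2 ^ (2 - q) * |a - b| ^ (q - 1) := by
  rcases le_total b a with h | h
  · exact mzPsi_holder_aux hq1 hq2 h
  · rw [abs_sub_comm, abs_sub_comm a b]
    exact mzPsi_holder_aux hq1 hq2 h

lemma mz_hasDerivAt_abs_rpow {q : ℝ} (hq1 : 1 < q) (x : ℝ) :
    HasDerivAt (fun t : ℝ => |t| ^ q) (q * mzPsi q x) x := by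
  have hq0 : q ≠ 0 := by linarith
  rcases lt_trichotomy x 0 with hx | rfl | hx
  · -- x < 0
    have h1 : HasDerivAt (fun t : ℝ => (-t) ^ q) (q * (-x) ^ (q - 1) * (-1)) x :=
      (Real.hasDerivAt_rpow_const (p := q) (Or.inl (neg_ne_zero.mpr hx.ne))).comp x
        (hasDerivAt_neg x)
    have h2 : (fun t : ℝ => (-t) ^ q) =ᶠ[nhds x] (fun t : ℝ => |t| ^ q) := by
      filter_upwards [Iio_mem_nhds hx] with t ht
      rw [abs_of_neg ht]
    have h3 : q * (-x) ^ (q - 1) * (-1) = q * mzPsi q x := by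
      have : mzPsi q x = -((-x) ^ (q - 1)) := by
        rw [← mzPsi_nonneg_eq hq1 (by linarith : (0:ℝ) ≤ -x), ← mzPsi_neg, neg_neg]
      rw [this]; ring
    exact h3 ▸ (h1.congr_of_eventuallyEq h2.symm)
  · -- x = 0
    rw [mzPsi_zero, mul_zero]
    rw [hasDerivAt_iff_isLittleO]
    simp only [sub_zero, abs_zero, Real.zero_rpow hq0, smul_zero, sub_zero]
    rw [Asymptotics.isLittleO_iff]
    intro c hc
    have hδ : 0 < c ^ (q - 1)⁻¹ := Real.rpow_pos_of_pos hc _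
    filter_upwards [Metric.ball_mem_nhds (0:ℝ) hδ] with t ht
    rw [Metric.mem_ball, Real.dist_eq, sub_zero] at ht
    rcases eq_or_ne t 0 with rfl | ht0
    · simp [Real.zero_rpow hq0]
    · have habs : 0 < |t| := abs_pos.mpr ht0
      have h1 : |t| ^ q = |t| ^ (q - 1) * |t| := by
        rw [show q = q - 1 + 1 by ring, Real.rpow_add habs, Real.rpow_one]
        ring_nf
      have h2 : |t| ^ (q - 1) ≤ c := by
        have := Real.rpow_le_rpow (abs_nonneg t) ht.le (by linarith : (0:ℝ) ≤ q - 1)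
        rwa [Real.rpow_inv_rpow hc.le (by intro h'; linarith : q - 1 ≠ 0)] at this
      have h3 : ‖|t| ^ q‖ = |t| ^ q := by
        rw [Real.norm_eq_abs, abs_of_nonneg (Real.rpow_nonneg (abs_nonneg t) _)]
      rw [h3, h1, Real.norm_eq_abs]
      exact mul_le_mul_of_nonneg_right h2 (abs_nonneg t)
  · -- 0 < x
    have h1 : HasDerivAt (fun t : ℝ => t ^ q) (q * x ^ (q - 1)) x :=
      Real.hasDerivAt_rpow_const (p := q) (Or.inl hx.ne')
    have h2 : (fun t : ℝ => t ^ q) =ᶠ[nhds x] (fun t : ℝ => |t| ^ q) := by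
      filter_upwards [Ioi_mem_nhds hx] with t ht
      rw [abs_of_pos ht]
    have h3 : q * x ^ (q - 1) = q * mzPsi q x := by
      rw [mzPsi_nonneg_eq hq1 hx.le]
    exact h3 ▸ (h1.congr_of_eventuallyEq h2.symm)

lemma mz_pointwise {q : ℝ} (hq1 : 1 < q) (hq2 : q ≤ 2) (x y : ℝ) :
    |x + y| ^ q ≤ |x| ^ q + q * mzPsi q x * y + 2 ^ (2 - q) * |y| ^ q := by
  have hq0 : (0:ℝ) < q := by linarith
  set c : ℝ := 2 ^ (2 - q) with hc
  set F : ℝ → ℝ := fun t => |x| ^ q + q * mzPsi q x * t + c * |t| ^ q - |x + t| ^ q with hFdef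
  have hF' : ∀ t, HasDerivAt F
      (q * mzPsi q x + c * (q * mzPsi q t) - q * mzPsi q (x + t)) t := by
    intro t
    have h1 : HasDerivAt (fun t : ℝ => |x + t| ^ q) (q * mzPsi q (x + t)) t := by
      have := (mz_hasDerivAt_abs_rpow hq1 (x + t)).comp t
        (((hasDerivAt_id t).const_add x))
      rw [mul_one] at this
      exact this
    have h2 : HasDerivAt (fun t : ℝ => q * mzPsi q x * t) (q * mzPsi q x) t := by
      simpa using (hasDerivAt_id t).const_mul (q * mzPsi q x)
    have h3 : HasDerivAt (fun t : ℝ => c * |t| ^ q) (c * (q * mzPsi q t)) t :=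
      (mz_hasDerivAt_abs_rpow hq1 t).const_mul c
    have h4 := (((hasDerivAt_const t (|x| ^ q)).add h2).add h3).sub h1
    rw [zero_add] at h4
    exact h4
  have hdiff : Differentiable ℝ F := fun t => (hF' t).differentiableAt
  have hcont : Continuous F := hdiff.continuous
  have hF0 : F 0 = 0 := by
    simp [hFdef, Real.zero_rpow (show q ≠ 0 by linarith)]
  have hcnn : 0 ≤ c := Real.rpow_nonneg (by norm_num) _
  have hkey : ∀ t : ℝ, 0 ≤ F t := by
    intro t
    rcases le_total 0 t with ht | ht
    · have hmono : MonotoneOn F (Set.Ici 0) := by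
        apply monotoneOn_of_deriv_nonneg (convex_Ici 0) hcont.continuousOn
          (fun s _ => (hF' s).differentiableAt.differentiableWithinAt)
        intro s hs
        rw [interior_Ici] at hs
        have hs0 : 0 < s := hs
        rw [(hF' s).deriv]
        have hh := mzPsi_holder hq1 hq2 (x + s) x
        have e : x + s - x = s := by ring
        rw [e, abs_of_pos hs0] at hh
        have h1 : mzPsi q (x + s) - mzPsi q x ≤ c * s ^ (q - 1) :=
          le_trans (le_abs_self _) hh
        have h2 : mzPsi q s = s ^ (q - 1) := mzPsi_nonneg_eq hq1 hs0.le
        rw [h2]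
        nlinarith [mul_le_mul_of_nonneg_left h1 hq0.le]
      have := hmono (Set.self_mem_Ici) (Set.mem_Ici.mpr ht) ht
      rwa [hF0] at this
    · have hanti : AntitoneOn F (Set.Iic 0) := by
        apply antitoneOn_of_deriv_nonpos (convex_Iic 0) hcont.continuousOn
          (fun s _ => (hF' s).differentiableAt.differentiableWithinAt)
        intro s hs
        rw [interior_Iic] at hs
        have hs0 : s < 0 := hs
        rw [(hF' s).deriv]
        have hh := mzPsi_holder hq1 hq2 x (x + s)
        have e : x - (x + s) = -s := by ring
        rw [e, abs_of_pos (by linarith : (0:ℝ) < -s)] at hh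
        have h1 : mzPsi q x - mzPsi q (x + s) ≤ c * (-s) ^ (q - 1) :=
          le_trans (le_abs_self _) hh
        have h2 : mzPsi q s = -((-s) ^ (q - 1)) := by
          rw [← mzPsi_nonneg_eq hq1 (by linarith : (0:ℝ) ≤ -s), ← mzPsi_neg, neg_neg]
        rw [h2]
        nlinarith [mul_le_mul_of_nonneg_left h1 hq0.le]
      have := hanti (Set.mem_Iic.mpr ht) (Set.self_mem_Iic) ht
      rwa [hF0] at this
  have := hkey y
  simp only [hFdef] at this
  linarith

lemma mzPsi_measurable (q : ℝ) : Measurable (mzPsi q) :=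
  (measurable_abs.pow_const (q - 2)).mul measurable_id

lemma mz_abs_rpow_integrable {Ω : Type*} [MeasurableSpace Ω] {μ : Measure Ω}
    {q : ℝ} (hq0 : 0 < q) {f : Ω → ℝ} (hf : MemLp f (ENNReal.ofReal q) μ) :
    Integrable (fun ω => |f ω| ^ q) μ := by
  have h := hf.integrable_norm_rpow (by simpa [ENNReal.ofReal_pos] using hq0) ENNReal.ofReal_ne_top
  simpa [Real.norm_eq_abs, ENNReal.toReal_ofReal hq0.le] using h

lemma mz_step {Ω : Type*} [MeasurableSpace Ω] {μ : Measure Ω} [IsProbabilityMeasure μ]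
    {q : ℝ} (hq1 : 1 < q) (hq2 : q ≤ 2)
    {X Y : Ω → ℝ} (hXm : Measurable X) (hYm : Measurable Y)
    (hX : MemLp X (ENNReal.ofReal q) μ) (hY : MemLp Y (ENNReal.ofReal q) μ)
    (hind : IndepFun X Y μ) (hY0 : ∫ ω, Y ω ∂μ = 0) :
    ∫ ω, |X ω + Y ω| ^ q ∂μ
      ≤ ∫ ω, |X ω| ^ q ∂μ + 2 ^ (2 - q) * ∫ ω, |Y ω| ^ q ∂μ := by
  have hq0 : (0:ℝ) < q := by linarith
  have iXY : Integrable (fun ω => |X ω + Y ω| ^ q) μ := mz_abs_rpow_integrable hq0 (hX.add hY)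
  have iX : Integrable (fun ω => |X ω| ^ q) μ := mz_abs_rpow_integrable hq0 hX
  have iY : Integrable (fun ω => |Y ω| ^ q) μ := mz_abs_rpow_integrable hq0 hY
  have iψX : Integrable (fun ω => mzPsi q (X ω)) μ := by
    apply Integrable.mono ((integrable_const (1:ℝ)).add iX)
      ((mzPsi_measurable q).comp hXm).aestronglyMeasurable
    apply ae_of_all
    intro ω
    simp only [Function.comp_apply, Pi.add_apply, Real.norm_eq_abs]
    rw [abs_mzPsi hq1]
    have h1 : (0:ℝ) ≤ |X ω| ^ q := Real.rpow_nonneg (abs_nonneg _) _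
    rw [abs_of_nonneg (by linarith : (0:ℝ) ≤ 1 + |X ω| ^ q)]
    rcases le_total (|X ω|) 1 with h | h
    · have : |X ω| ^ (q - 1) ≤ 1 := Real.rpow_le_one (abs_nonneg _) h (by linarith)
      linarith
    · have : |X ω| ^ (q - 1) ≤ |X ω| ^ q :=
        Real.rpow_le_rpow_of_exponent_le h (by linarith)
      linarith
  have iYint : Integrable Y μ := hY.integrable (by rw [← ENNReal.ofReal_one]; exact ENNReal.ofReal_le_ofReal (by linarith))
  have indψ : IndepFun (fun ω => mzPsi q (X ω)) Y μ :=
    hind.comp (mzPsi_measurable q) measurable_id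
  have iprod : Integrable (fun ω => mzPsi q (X ω) * Y ω) μ :=
    indψ.integrable_mul iψX iYint
  have hcross : ∫ ω, mzPsi q (X ω) * Y ω ∂μ = 0 := by
    have h := indψ.integral_mul_eq_mul_integral iψX.aestronglyMeasurable iYint.aestronglyMeasurable
    have h2 : (fun ω => mzPsi q (X ω) * Y ω) = (fun ω => mzPsi q (X ω)) * Y := rfl
    rw [h2, h, hY0, mul_zero]
  have ig : Integrable
      (fun ω => |X ω| ^ q + q * (mzPsi q (X ω) * Y ω) + 2 ^ (2 - q) * |Y ω| ^ q) μ :=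
    (iX.add (iprod.const_mul q)).add (iY.const_mul _)
  have hmono := integral_mono iXY ig (fun ω => by
    have := mz_pointwise hq1 hq2 (X ω) (Y ω)
    simpa [mul_assoc] using this)
  have i1 : Integrable (fun ω => |X ω| ^ q + q * (mzPsi q (X ω) * Y ω)) μ :=
    iX.add (iprod.const_mul q)
  rw [integral_add i1 (iY.const_mul _), integral_add iX (iprod.const_mul q),
    integral_const_mul q, integral_const_mul, hcross, mul_zero, add_zero] at hmono
  exact hmono

lemma mz_sum_bound {Ω : Type*} [MeasurableSpace Ω] {μ : Measure Ω} [IsProbabilityMeasure μ]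
    {q : ℝ} (hq1 : 1 < q) (hq2 : q ≤ 2)
    {m : ℕ} {Zs : Fin m → Ω → ℝ} (hmeas : ∀ i, Measurable (Zs i))
    (hindep : iIndepFun Zs μ)
    {B : ℝ} (hℒ : ∀ i, MemLp (Zs i) (ENNReal.ofReal q) μ)
    (h0 : ∀ i, ∫ ω, Zs i ω ∂μ = 0)
    (hBq : ∀ i, ∫ ω, |Zs i ω| ^ q ∂μ ≤ B)
    (s : Finset (Fin m)) :
    ∫ ω, |∑ i ∈ s, Zs i ω| ^ q ∂μ ≤ 2 ^ (2 - q) * s.card * B := by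
  have hq0 : (0:ℝ) < q := by linarith
  have h2nn : (0:ℝ) ≤ 2 ^ (2 - q) := Real.rpow_nonneg (by norm_num) _
  classical
  induction s using Finset.induction_on with
  | empty => simp [Real.zero_rpow hq0.ne']
  | @insert a s ha ih =>
    have hXm : Measurable (fun ω => ∑ i ∈ s, Zs i ω) :=
      Finset.measurable_sum s (fun i _ => hmeas i)
    have hXℒ : MemLp (fun ω => ∑ i ∈ s, Zs i ω) (ENNReal.ofReal q) μ := by
      have := memLp_finset_sum s (fun i (_ : i ∈ s) => hℒ i)
      simpa using this
    have hind : IndepFun (fun ω => ∑ i ∈ s, Zs i ω) (Zs a) μ := by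
      have h := hindep.indepFun_finset_sum_of_notMem hmeas ha
      have e : (∑ j ∈ s, Zs j) = fun ω => ∑ j ∈ s, Zs j ω := by
        ext ω; simp [Finset.sum_apply]
      rwa [e] at h
    have hstep := mz_step hq1 hq2 hXm (hmeas a) hXℒ (hℒ a) hind (h0 a)
    have hB0 : 0 ≤ B := le_trans (integral_nonneg
      (fun ω => Real.rpow_nonneg (abs_nonneg _) _)) (hBq a)
    have e2 : ∀ ω, ∑ i ∈ insert a s, Zs i ω = (∑ i ∈ s, Zs i ω) + Zs a ω := by
      intro ω
      rw [Finset.sum_insert ha, add_comm]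
    simp_rw [e2]
    calc ∫ ω, |(∑ i ∈ s, Zs i ω) + Zs a ω| ^ q ∂μ
        ≤ ∫ ω, |∑ i ∈ s, Zs i ω| ^ q ∂μ + 2 ^ (2 - q) * ∫ ω, |Zs a ω| ^ q ∂μ := hstep
      _ ≤ 2 ^ (2 - q) * s.card * B + 2 ^ (2 - q) * B := by
          have := mul_le_mul_of_nonneg_left (hBq a) h2nn
          linarith [ih]
      _ = 2 ^ (2 - q) * (insert a s).card * B := by
          rw [Finset.card_insert_of_notMem ha]
          push_cast
          ring

/-- **Marcinkiewicz–Zygmund type inequality, case `1 < q ≤ 2`** (Lemma 2.7):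
for a mean-zero real random variable `Z ∈ L_q` and i.i.d. copies `Z_1, …, Z_m` of `Z`,
`‖(1/m) ∑ Z_i‖_q ≤ 2^(2/q - 1) * m^(-(1 - 1/q)) * ‖Z‖_q`. -/
theorem mz_inequality_low
    {Ω : Type*} [MeasurableSpace Ω] (μ : Measure Ω) [IsProbabilityMeasure μ]
    (q : ℝ) (hq1 : 1 < q) (hq2 : q ≤ 2)
    (Z : Ω → ℝ) (hZmeas : Measurable Z) (hZ : MemLp Z (ENNReal.ofReal q) μ)
    (hZ0 : (∫ ω, Z ω ∂μ) = 0)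
    (m : ℕ) (hm : 0 < m) (Zs : Fin m → Ω → ℝ) (hmeas : ∀ i, Measurable (Zs i))
    (hindep : iIndepFun Zs μ)
    (hid : ∀ i, IdentDistrib (Zs i) Z μ μ) :
    eLpNorm (fun ω => (m : ℝ)⁻¹ * ∑ i, Zs i ω) (ENNReal.ofReal q) μ
      ≤ ENNReal.ofReal ((2 : ℝ) ^ (2 / q - 1) * (m : ℝ) ^ (-(1 - 1 / q)))
          * eLpNorm Z (ENNReal.ofReal q) μ := by
  have hq0 : (0:ℝ) < q := by linarith
  have hpne0 : ENNReal.ofReal q ≠ 0 := by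
    simp only [ne_eq, ENNReal.ofReal_eq_zero, not_le]; exact hq0
  have hpnetop : ENNReal.ofReal q ≠ ⊤ := ENNReal.ofReal_ne_top
  have hℒi : ∀ i, MemLp (Zs i) (ENNReal.ofReal q) μ := fun i => (hid i).symm.memLp_snd hZ
  have h0i : ∀ i, ∫ ω, Zs i ω ∂μ = 0 := fun i => by rw [(hid i).integral_eq, hZ0]
  have hB0 : 0 ≤ ∫ ω, |Z ω| ^ q ∂μ :=
    integral_nonneg fun ω => Real.rpow_nonneg (abs_nonneg _) _
  have hBq : ∀ i, ∫ ω, |Zs i ω| ^ q ∂μ = ∫ ω, |Z ω| ^ q ∂μ := fun i => by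
    have := ((hid i).comp (measurable_abs.pow_const q)).integral_eq
    simpa using this
  have hsum := mz_sum_bound hq1 hq2 hmeas hindep hℒi h0i
    (fun i => (hBq i).le) Finset.univ
  rw [Finset.card_univ, Fintype.card_fin] at hsum
  have hA0 : 0 ≤ ∫ ω, |∑ i, Zs i ω| ^ q ∂μ :=
    integral_nonneg fun ω => Real.rpow_nonneg (abs_nonneg _) _
  have hm' : (0:ℝ) < m := by exact_mod_cast hm
  have hf : MemLp (fun ω => (m:ℝ)⁻¹ * ∑ i, Zs i ω) (ENNReal.ofReal q) μ := by
    apply MemLp.const_mul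
    have := memLp_finset_sum Finset.univ (fun i (_ : i ∈ Finset.univ) => hℒi i)
    simpa using this
  rw [hf.eLpNorm_eq_integral_rpow_norm hpne0 hpnetop,
      hZ.eLpNorm_eq_integral_rpow_norm hpne0 hpnetop]
  simp only [ENNReal.toReal_ofReal hq0.le, Real.norm_eq_abs]
  have hCnn : (0:ℝ) ≤ (2:ℝ) ^ (2/q - 1) * (m:ℝ) ^ (-(1 - 1/q)) :=
    mul_nonneg (Real.rpow_nonneg (by norm_num) _) (Real.rpow_nonneg hm'.le _)
  rw [← ENNReal.ofReal_mul hCnn]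
  apply ENNReal.ofReal_le_ofReal
  have hinvnn : (0:ℝ) ≤ ((m:ℝ))⁻¹ := inv_nonneg.mpr hm'.le
  have hIf : (∫ ω, |(m:ℝ)⁻¹ * ∑ i, Zs i ω| ^ q ∂μ)
      = ((m:ℝ)⁻¹) ^ q * ∫ ω, |∑ i, Zs i ω| ^ q ∂μ := by
    rw [← integral_const_mul]
    congr 1
    ext ω
    rw [abs_mul, abs_of_nonneg hinvnn,
      Real.mul_rpow hinvnn (abs_nonneg _)]
  rw [hIf, Real.mul_rpow (Real.rpow_nonneg hinvnn q) hA0,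
    Real.rpow_rpow_inv hinvnn hq0.ne']
  have hstep : (∫ ω, |∑ i, Zs i ω| ^ q ∂μ) ^ q⁻¹
      ≤ (2 ^ (2 - q) * (m:ℝ) * ∫ ω, |Z ω| ^ q ∂μ) ^ q⁻¹ :=
    Real.rpow_le_rpow hA0 hsum (by positivity)
  have h2nn : (0:ℝ) ≤ (2:ℝ) ^ (2 - q) := Real.rpow_nonneg (by norm_num) _
  calc (m:ℝ)⁻¹ * (∫ ω, |∑ i, Zs i ω| ^ q ∂μ) ^ q⁻¹
      ≤ (m:ℝ)⁻¹ * (2 ^ (2 - q) * (m:ℝ) * ∫ ω, |Z ω| ^ q ∂μ) ^ q⁻¹ :=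
        mul_le_mul_of_nonneg_left hstep hinvnn
    _ = (2:ℝ) ^ (2/q - 1) * (m:ℝ) ^ (-(1 - 1/q)) * (∫ ω, |Z ω| ^ q ∂μ) ^ q⁻¹ := by
        have e1 : ((2:ℝ) ^ (2 - q)) ^ q⁻¹ = 2 ^ (2/q - 1) := by
          rw [← Real.rpow_mul (by norm_num : (0:ℝ) ≤ 2)]
          congr 1
          field_simp
        have e2 : (m:ℝ)⁻¹ * (m:ℝ) ^ q⁻¹ = (m:ℝ) ^ (-(1 - 1/q)) := by
          rw [← Real.rpow_neg_one (m:ℝ), ← Real.rpow_add hm']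
          congr 1
          rw [one_div]
          ring
        rw [Real.mul_rpow (mul_nonneg h2nn hm'.le) hB0,
          Real.mul_rpow h2nn hm'.le, e1, ← e2]
        ring
end

section
/- Norm bound for the centering projection: Let π be a probability measure on a measurable space G, let 1 ≤ q ≤ ∞, and let f ∈ L_q(π). Then ‖f − ∫ f dπ‖_q ≤ 2^{|2/q − 1|}·‖f‖_q, where for q = ∞ one reads 2^{|2/q−1|} = 2. -/
open MeasureTheory ENNReal

private lemma my_mid_concave {α a b : ℝ} (h0 : 0 ≤ α) (h1 : α ≤ 1) (ha : 0 ≤ a) (hb : 0 ≤ b) :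
    a ^ α + b ^ α ≤ 2 ^ (1 - α) * (a + b) ^ α := by
  have h := (Real.concaveOn_rpow h0 h1).2 (Set.mem_Ici.2 ha) (Set.mem_Ici.2 hb)
      (by norm_num : (0:ℝ) ≤ 1/2) (by norm_num : (0:ℝ) ≤ 1/2) (by norm_num)
  simp only [smul_eq_mul] at h
  have hhalf : (1/2 : ℝ) * a + (1/2) * b = (a + b) / 2 := by ring
  rw [hhalf] at h
  have hdiv : ((a + b) / 2 : ℝ) ^ α = (a + b) ^ α / 2 ^ α :=
    Real.div_rpow (by linarith) (by norm_num) α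
  have h2 : (2:ℝ) ^ (1 - α) = 2 / 2 ^ α := by
    rw [Real.rpow_sub (by norm_num), Real.rpow_one]
  have hpos : (0:ℝ) < 2 ^ α := Real.rpow_pos_of_pos (by norm_num) _
  rw [hdiv] at h
  have h4 := mul_le_mul_of_nonneg_right h hpos.le
  rw [div_mul_cancel₀ _ hpos.ne'] at h4
  rw [h2, div_mul_eq_mul_div, le_div_iff₀ hpos]
  nlinarith [h4]

private lemma my_mid_convex {β a b : ℝ} (h1 : 1 ≤ β) (ha : 0 ≤ a) (hb : 0 ≤ b) :
    2 ^ (1 - β) * (a + b) ^ β ≤ a ^ β + b ^ β := by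
  have h := (convexOn_rpow h1).2 (Set.mem_Ici.2 ha) (Set.mem_Ici.2 hb)
      (by norm_num : (0:ℝ) ≤ 1/2) (by norm_num : (0:ℝ) ≤ 1/2) (by norm_num)
  simp only [smul_eq_mul] at h
  have hhalf : (1/2 : ℝ) * a + (1/2) * b = (a + b) / 2 := by ring
  rw [hhalf] at h
  have hdiv : ((a + b) / 2 : ℝ) ^ β = (a + b) ^ β / 2 ^ β :=
    Real.div_rpow (by linarith) (by norm_num) β
  have h2 : (2:ℝ) ^ (1 - β) = 2 / 2 ^ β := by
    rw [Real.rpow_sub (by norm_num), Real.rpow_one]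
  have hpos : (0:ℝ) < 2 ^ β := Real.rpow_pos_of_pos (by norm_num) _
  rw [hdiv] at h
  have h4 := mul_le_mul_of_nonneg_right h hpos.le
  rw [div_mul_cancel₀ _ hpos.ne'] at h4
  rw [h2, div_mul_eq_mul_div, div_le_iff₀ hpos]
  nlinarith [h4]

private lemma my_subadd {α a b : ℝ} (h0 : 0 ≤ α) (h1 : α ≤ 1) (ha : 0 ≤ a) (hb : 0 ≤ b) :
    (a + b) ^ α ≤ a ^ α + b ^ α := by
  have h := NNReal.rpow_add_le_add_rpow a.toNNReal b.toNNReal h0 h1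
  have h2 : ((a.toNNReal + b.toNNReal : NNReal) : ℝ) ^ α
      ≤ ((a.toNNReal : ℝ)) ^ α + ((b.toNNReal : ℝ)) ^ α := by
    rw [← NNReal.coe_rpow, ← NNReal.coe_rpow, ← NNReal.coe_rpow]
    exact_mod_cast h
  rwa [NNReal.coe_add, Real.coe_toNNReal a ha, Real.coe_toNNReal b hb] at h2

private lemma my_superadd {β a b : ℝ} (h1 : 1 ≤ β) (ha : 0 ≤ a) (hb : 0 ≤ b) :
    a ^ β + b ^ β ≤ (a + b) ^ β := by
  have h := NNReal.add_rpow_le_rpow_add a.toNNReal b.toNNReal h1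
  have h2 : ((a.toNNReal : ℝ)) ^ β + ((b.toNNReal : ℝ)) ^ β
      ≤ ((a.toNNReal + b.toNNReal : NNReal) : ℝ) ^ β := by
    rw [← NNReal.coe_rpow, ← NNReal.coe_rpow, ← NNReal.coe_rpow]
    exact_mod_cast h
  rwa [NNReal.coe_add, Real.coe_toNNReal a ha, Real.coe_toNNReal b hb] at h2

/-- Core monotonicity lemma: if the derivative expression is nonnegative on `(0,∞)`,
then `F u ≥ F 0 = a` for `u ≥ 0`, where `F u = a*(1+u)^p + b*u^p + e*u`. -/
private lemma my_mono_core {p a b e : ℝ} (hp : 1 ≤ p)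
    (hd : ∀ u : ℝ, 0 < u → 0 ≤ (a * (1 + u) ^ (p - 1) + b * u ^ (p - 1)) * p + e) :
    ∀ u : ℝ, 0 ≤ u → a ≤ a * (1 + u) ^ p + b * u ^ p + e * u := by
  have hp0 : (0:ℝ) < p := lt_of_lt_of_le one_pos hp
  set F : ℝ → ℝ := fun u => a * (1 + u) ^ p + b * u ^ p + e * u with hF
  have hder : ∀ u : ℝ, 0 < u →
      HasDerivAt F ((a * (1 + u) ^ (p - 1) + b * u ^ (p - 1)) * p + e) u := by
    intro u hu
    have h1 : HasDerivAt (fun u : ℝ => (1 + u)) 1 u := (hasDerivAt_id u).const_add 1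
    have h2 : HasDerivAt (fun u : ℝ => (1 + u) ^ p) (1 * p * (1 + u) ^ (p - 1)) u :=
      h1.rpow_const (Or.inl (by positivity))
    have h3 : HasDerivAt (fun u : ℝ => u ^ p) (1 * p * u ^ (p - 1)) u :=
      (hasDerivAt_id u).rpow_const (Or.inl hu.ne')
    have h4 := ((h2.const_mul a).add (h3.const_mul b)).add ((hasDerivAt_id u).const_mul e)
    exact h4.congr_deriv (by ring)
  have hcontp : Continuous fun u : ℝ => u ^ p := by
    rw [continuous_iff_continuousAt]
    intro x
    exact Real.continuousAt_rpow_const x p (Or.inr hp0.le)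
  have hcont : Continuous F := by
    apply Continuous.add
    apply Continuous.add
    · exact continuous_const.mul (hcontp.comp (continuous_const.add continuous_id))
    · exact continuous_const.mul hcontp
    · exact continuous_const.mul continuous_id
  have hmono : MonotoneOn F (Set.Ici 0) := by
    apply monotoneOn_of_deriv_nonneg (convex_Ici 0) hcont.continuousOn
    · intro u hu
      rw [interior_Ici] at hu
      exact (hder u hu).differentiableAt.differentiableWithinAt
    · intro u hu
      rw [interior_Ici] at hu
      rw [(hder u hu).deriv]
      exact hd u hu
  intro u hu
  have h0 : F 0 = a := by
    simp [hF, Real.zero_rpow hp0.ne']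
  have := hmono Set.self_mem_Ici (Set.mem_Ici.2 hu) hu
  rwa [h0] at this

/-- Claim B: for `1 ≤ p ≤ 2`, `|u|^p + p·u ≤ 2^(2-p)·|1+u|^p`. -/
private lemma my_claimB {p : ℝ} (hp1 : 1 ≤ p) (hp2 : p ≤ 2) (u : ℝ) :
    |u| ^ p + p * u ≤ 2 ^ (2 - p) * |1 + u| ^ p := by
  have hα0 : (0:ℝ) ≤ p - 1 := by linarith
  have hα1 : p - 1 ≤ 1 := by linarith
  have hD1 : (1:ℝ) ≤ 2 ^ (2 - p) := by
    calc (1:ℝ) = 2 ^ (0:ℝ) := (Real.rpow_zero 2).symm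
    _ ≤ 2 ^ (2 - p) := Real.rpow_le_rpow_of_exponent_le (by norm_num) (by linarith)
  have hDpos : (0:ℝ) < 2 ^ (2 - p) := by positivity
  rcases le_or_gt 0 u with hu | hu
  · -- u ≥ 0
    have core := my_mono_core (a := 2 ^ (2 - p)) (b := -1) (e := -p) hp1 ?_ u hu
    · rw [abs_of_nonneg hu, abs_of_nonneg (by linarith : (0:ℝ) ≤ 1 + u)]
      nlinarith [core]
    · intro v hv
      have h2 := my_mid_concave hα0 hα1 (by norm_num : (0:ℝ) ≤ 1) hv.le
      rw [Real.one_rpow] at h2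
      have heq : (1:ℝ) - (p - 1) = 2 - p := by ring
      rw [heq] at h2
      nlinarith [h2, lt_of_lt_of_le one_pos hp1]
  · rcases le_or_gt u (-1) with hu1 | hu1
    · -- u ≤ -1 : u = -(1+v), v ≥ 0
      set v := -u - 1 with hv
      have hv0 : 0 ≤ v := by simp [hv]; linarith
      have core := my_mono_core (a := -1) (b := 2 ^ (2 - p)) (e := p) hp1 ?_ v hv0
      · have habs1 : |u| = 1 + v := by rw [abs_of_neg hu]; ring
        have habs2 : |1 + u| = v := by
          rw [abs_of_nonpos (by linarith : 1 + u ≤ 0), hv]; ring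
        rw [habs1, habs2]
        have hval : u = -(1 + v) := by rw [hv]; ring
        rw [hval]
        nlinarith [core]
      · intro w hw
        have h2 := my_subadd hα0 hα1 (by norm_num : (0:ℝ) ≤ 1) hw.le
        rw [Real.one_rpow] at h2
        have h3 : w ^ (p - 1) ≤ 2 ^ (2 - p) * w ^ (p - 1) := by
          nlinarith [Real.rpow_nonneg hw.le (p - 1)]
        nlinarith [lt_of_lt_of_le one_pos hp1]
    · -- -1 < u < 0
      set v := -u with hv
      have hv0 : 0 < v := by simp [hv]; linarith
      have hv1 : v < 1 := by simp [hv]; linarith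
      have habs1 : |u| = v := by rw [abs_of_neg hu]
      have hvp : v ^ p ≤ v := by
        calc v ^ p ≤ v ^ (1:ℝ) :=
          Real.rpow_le_rpow_of_exponent_ge hv0 hv1.le hp1
        _ = v := Real.rpow_one v
      have hrhs : 0 ≤ 2 ^ (2 - p) * |1 + u| ^ p := by positivity
      rw [habs1]
      have : p * u = -(p * v) := by rw [hv]; ring
      rw [this]
      nlinarith [hvp]

/-- Claim A: for `2 ≤ p`, `2^(2-p)·|u|^p + p·u ≤ |1+u|^p`. -/
private lemma my_claimA {p : ℝ} (hp2 : 2 ≤ p) (u : ℝ) :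
    2 ^ (2 - p) * |u| ^ p + p * u ≤ |1 + u| ^ p := by
  have hp1 : (1:ℝ) ≤ p := by linarith
  have hβ1 : (1:ℝ) ≤ p - 1 := by linarith
  have hD1 : (2:ℝ) ^ (2 - p) ≤ 1 := by
    calc (2:ℝ) ^ (2 - p) ≤ 2 ^ (0:ℝ) :=
      Real.rpow_le_rpow_of_exponent_le (by norm_num) (by linarith)
    _ = 1 := Real.rpow_zero 2
  have hDpos : (0:ℝ) < 2 ^ (2 - p) := by positivity
  rcases le_or_gt 0 u with hu | hu
  · -- u ≥ 0
    have core := my_mono_core (a := 1) (b := -(2 ^ (2 - p))) (e := -p) hp1 ?_ u hu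
    · rw [abs_of_nonneg hu, abs_of_nonneg (by linarith : (0:ℝ) ≤ 1 + u)]
      nlinarith [core]
    · intro v hv
      have h2 := my_superadd hβ1 (by norm_num : (0:ℝ) ≤ 1) hv.le
      rw [Real.one_rpow] at h2
      have h3 : 2 ^ (2 - p) * v ^ (p - 1) ≤ v ^ (p - 1) := by
        nlinarith [Real.rpow_nonneg hv.le (p - 1)]
      nlinarith [lt_of_lt_of_le one_pos hp1]
  · rcases le_or_gt u (-1) with hu1 | hu1
    · -- u ≤ -1
      set v := -u - 1 with hv
      have hv0 : 0 ≤ v := by simp [hv]; linarith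
      have core := my_mono_core (a := -(2 ^ (2 - p))) (b := 1) (e := p) hp1 ?_ v hv0
      · have habs1 : |u| = 1 + v := by rw [abs_of_neg hu]; ring
        have habs2 : |1 + u| = v := by
          rw [abs_of_nonpos (by linarith : 1 + u ≤ 0), hv]; ring
        rw [habs1, habs2]
        have hval : u = -(1 + v) := by rw [hv]; ring
        rw [hval]
        nlinarith [core]
      · intro w hw
        have h2 := my_mid_convex hβ1 hw.le (by norm_num : (0:ℝ) ≤ 1)
        rw [Real.one_rpow] at h2
        have heq : (1:ℝ) - (p - 1) = 2 - p := by ring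
        rw [heq] at h2
        have heq2 : w + 1 = 1 + w := by ring
        rw [heq2] at h2
        nlinarith [lt_of_lt_of_le one_pos hp1]
    · -- -1 < u < 0
      set v := -u with hv
      have hv0 : 0 < v := by simp [hv]; linarith
      have hv1 : v < 1 := by simp [hv]; linarith
      have habs1 : |u| = v := by rw [abs_of_neg hu]
      have hvp : v ^ p ≤ v := by
        calc v ^ p ≤ v ^ (1:ℝ) :=
          Real.rpow_le_rpow_of_exponent_ge hv0 hv1.le hp1
        _ = v := Real.rpow_one v
      have hrhs : 0 ≤ |1 + u| ^ p := Real.rpow_nonneg (abs_nonneg _) p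
      rw [habs1]
      have h5 : p * u = -(p * v) := by rw [hv]; ring
      rw [h5]
      nlinarith [hvp, Real.rpow_nonneg hv0.le p]

/-- Unified pointwise inequality: `|u|^p ≤ 2^|p-2|·|1+u|^p + C·u` for a suitable `C`. -/
private lemma my_key_u {p : ℝ} (hp : 1 ≤ p) :
    ∃ C : ℝ, ∀ u : ℝ, |u| ^ p ≤ 2 ^ |p - 2| * |1 + u| ^ p + C * u := by
  rcases le_or_gt p 2 with hp2 | hp2
  · refine ⟨-p, fun u => ?_⟩
    have h := my_claimB hp hp2 u
    rw [abs_of_nonpos (by linarith : p - 2 ≤ 0)]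
    have : -(p - 2) = 2 - p := by ring
    rw [this]
    nlinarith [h]
  · refine ⟨-(2 ^ (p - 2) * p), fun u => ?_⟩
    have h := my_claimA hp2.le u
    rw [abs_of_nonneg (by linarith : (0:ℝ) ≤ p - 2)]
    have hE : (2:ℝ) ^ (p - 2) * 2 ^ (2 - p) = 1 := by
      rw [← Real.rpow_add (by norm_num : (0:ℝ) < 2)]
      norm_num
    have hpos : (0:ℝ) < 2 ^ (p - 2) := by positivity
    have h2 : 2 ^ (p - 2) * (2 ^ (2 - p) * |u| ^ p + p * u) ≤ 2 ^ (p - 2) * |1 + u| ^ p :=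
      mul_le_mul_of_nonneg_left h hpos.le
    have h3 : 2 ^ (p - 2) * (2 ^ (2 - p) * |u| ^ p + p * u)
        = |u| ^ p + 2 ^ (p - 2) * p * u := by
      calc 2 ^ (p - 2) * (2 ^ (2 - p) * |u| ^ p + p * u)
          = (2 ^ (p - 2) * 2 ^ (2 - p)) * |u| ^ p + 2 ^ (p - 2) * p * u := by ring
        _ = |u| ^ p + 2 ^ (p - 2) * p * u := by rw [hE]; ring
    linarith [h2, h3.symm.le, h3.le]

/-- Scaled pointwise inequality with center `m`. -/
private lemma my_key_scaled {p : ℝ} (hp : 1 ≤ p) (m : ℝ) :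
    ∃ C : ℝ, ∀ x : ℝ, |x - m| ^ p ≤ 2 ^ |p - 2| * |x| ^ p + C * (x - m) := by
  have hD1 : (1:ℝ) ≤ 2 ^ |p - 2| := by
    calc (1:ℝ) = 2 ^ (0:ℝ) := (Real.rpow_zero 2).symm
    _ ≤ 2 ^ |p - 2| := Real.rpow_le_rpow_of_exponent_le (by norm_num) (abs_nonneg _)
  -- main case m > 0
  have main : ∀ m : ℝ, 0 < m → ∃ C : ℝ, ∀ x : ℝ,
      |x - m| ^ p ≤ 2 ^ |p - 2| * |x| ^ p + C * (x - m) := by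
    intro m hm
    obtain ⟨C₀, hC₀⟩ := my_key_u hp
    refine ⟨C₀ * m ^ (p - 1), fun x => ?_⟩
    set u := (x - m) / m with hu
    have h1 : |x - m| = m * |u| := by
      rw [hu, abs_div, abs_of_pos hm]
      field_simp
    have h2 : |x| = m * |1 + u| := by
      have : m * (1 + u) = x := by rw [hu]; field_simp; ring
      rw [← this, abs_mul, abs_of_pos hm]
    have h3 : m ^ p * u = m ^ (p - 1) * (x - m) := by
      have hmp : m ^ p = m ^ (p - 1) * m := by
        rw [← Real.rpow_add_one hm.ne' (p - 1)]
        norm_num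
      rw [hmp, hu]
      field_simp
    have h := hC₀ u
    have hmp_pos : (0:ℝ) < m ^ p := Real.rpow_pos_of_pos hm p
    calc |x - m| ^ p = m ^ p * |u| ^ p := by
          rw [h1, Real.mul_rpow hm.le (abs_nonneg _)]
      _ ≤ m ^ p * (2 ^ |p - 2| * |1 + u| ^ p + C₀ * u) := by
          exact mul_le_mul_of_nonneg_left h hmp_pos.le
      _ = 2 ^ |p - 2| * (m ^ p * |1 + u| ^ p) + C₀ * (m ^ p * u) := by ring
      _ = 2 ^ |p - 2| * |x| ^ p + C₀ * m ^ (p - 1) * (x - m) := by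
          rw [h2, Real.mul_rpow hm.le (abs_nonneg _), h3]; ring
  rcases lt_trichotomy m 0 with hm | hm | hm
  · obtain ⟨C, hC⟩ := main (-m) (by linarith)
    refine ⟨-C, fun x => ?_⟩
    have := hC (-x)
    rw [show -x - -m = -(x - m) by ring, abs_neg, abs_neg] at this
    nlinarith [this]
  · refine ⟨0, fun x => ?_⟩
    subst hm
    simp only [sub_zero, zero_mul, add_zero]
    nlinarith [Real.rpow_nonneg (abs_nonneg x) p]
  · exact main m hm

/-- **Norm bound for the centering projection** (inequality (2.4)): for a probability
measure `π` on `G`, `1 ≤ q ≤ ∞`, and `f ∈ L_q(π)`, one has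
`‖f - ∫ f dπ‖_q ≤ 2^|2/q - 1| * ‖f‖_q` (for `q = ∞` the factor is `2`; note that
`q.toReal = 0` for `q = ∞`, so `|2/q.toReal - 1| = 1` there). -/
theorem centering_projection_norm_bound
    {G : Type*} [MeasurableSpace G] (π : Measure G) [IsProbabilityMeasure π]
    (q : ℝ≥0∞) (hq : 1 ≤ q) (f : G → ℝ) (hf : MemLp f q π) :
    eLpNorm (fun x => f x - ∫ x', f x' ∂π) q π
      ≤ ENNReal.ofReal ((2 : ℝ) ^ |2 / q.toReal - 1|) * eLpNorm f q π := by
  set m := ∫ x', f x' ∂π with hm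
  have hq0 : q ≠ 0 := (zero_lt_one.trans_le hq).ne'
  by_cases hqt : q = ∞
  · -- q = ∞
    subst hqt
    have hconst : ENNReal.ofReal ((2 : ℝ) ^ |2 / (⊤ : ℝ≥0∞).toReal - 1|) = 2 := by
      simp only [ENNReal.toReal_top, _root_.div_zero, zero_sub, abs_neg, abs_one, Real.rpow_one]
      norm_num
    rw [hconst]
    set S := eLpNorm f ⊤ π with hS
    have hSne : S ≠ ∞ := hf.2.ne
    have hb : ∀ᵐ x ∂π, ‖f x‖ ≤ S.toReal := by
      filter_upwards [ae_le_eLpNormEssSup (f := f) (μ := π)] with x hx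
      have : (‖f x‖₊ : ℝ≥0∞) ≤ S := by rwa [hS, eLpNorm_exponent_top]
      have := ENNReal.toReal_mono hSne this
      simpa using this
    have hmle : ‖m‖ ≤ S.toReal := by
      have := norm_integral_le_of_norm_le_const hb (f := f)
      simpa [hm] using this
    have h1 : eLpNorm (fun x => f x - m) ⊤ π
        ≤ eLpNorm f ⊤ π + eLpNorm (fun _ : G => m) ⊤ π :=
      eLpNorm_sub_le hf.1 aestronglyMeasurable_const le_top
    have h2 : eLpNorm (fun _ : G => m) ⊤ π = (‖m‖₊ : ℝ≥0∞) := by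
      rw [eLpNorm_exponent_top, eLpNormEssSup_const m (IsProbabilityMeasure.ne_zero π), enorm_eq_nnnorm]
    have h3 : (‖m‖₊ : ℝ≥0∞) ≤ S := by
      rw [← enorm_eq_nnnorm, ← ofReal_norm_eq_enorm]
      calc ENNReal.ofReal ‖m‖ ≤ ENNReal.ofReal S.toReal := ENNReal.ofReal_le_ofReal hmle
      _ = S := ENNReal.ofReal_toReal hSne
    calc eLpNorm (fun x => f x - m) ⊤ π ≤ S + (‖m‖₊ : ℝ≥0∞) := by rw [← h2]; exact h1
    _ ≤ S + S := add_le_add_right h3 S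
    _ = 2 * S := (two_mul S).symm
  · -- q finite
    set p := q.toReal with hp
    have hp1 : (1:ℝ) ≤ p := by
      have := ENNReal.toReal_mono hqt hq
      simpa using this
    have hp0 : (0:ℝ) < p := lt_of_lt_of_le one_pos hp1
    obtain ⟨C, hC⟩ := my_key_scaled hp1 m
    set g := fun x => f x - m with hg
    have hgmem : MemLp g q π := hf.sub (memLp_const m)
    have hfi : Integrable f π := hf.integrable hq
    have hgi : Integrable g π := hgmem.integrable hq
    have hgint : ∫ x, g x ∂π = 0 := by
      rw [hg]
      rw [integral_sub hfi (integrable_const m)]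
      simp [hm]
    have I1 : Integrable (fun x => |g x| ^ p) π := by
      simpa [Real.norm_eq_abs] using hgmem.integrable_norm_rpow hq0 hqt
    have I2f : Integrable (fun x => |f x| ^ p) π := by
      simpa [Real.norm_eq_abs] using hf.integrable_norm_rpow hq0 hqt
    have I2 : Integrable (fun x => 2 ^ |p - 2| * |f x| ^ p + C * g x) π :=
      (I2f.const_mul _).add (hgi.const_mul C)
    have hmono : ∫ x, |g x| ^ p ∂π ≤ ∫ x, (2 ^ |p - 2| * |f x| ^ p + C * g x) ∂π := by
      apply integral_mono I1 I2
      intro x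
      exact hC (f x)
    have hint : ∫ x, (2 ^ |p - 2| * |f x| ^ p + C * g x) ∂π
        = 2 ^ |p - 2| * ∫ x, |f x| ^ p ∂π := by
      rw [integral_add (I2f.const_mul _) (hgi.const_mul C), integral_const_mul,
        integral_const_mul, hgint]
      ring
    have key_int : ∫ x, |g x| ^ p ∂π ≤ 2 ^ |p - 2| * ∫ x, |f x| ^ p ∂π := by
      rw [← hint]; exact hmono
    rw [hgmem.eLpNorm_eq_integral_rpow_norm hq0 hqt, hf.eLpNorm_eq_integral_rpow_norm hq0 hqt]
    rw [← ENNReal.ofReal_mul (by positivity : (0:ℝ) ≤ 2 ^ |2 / q.toReal - 1|)]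
    apply ENNReal.ofReal_le_ofReal
    have hnorm_g : ∀ x, ‖g x‖ ^ p = |g x| ^ p := fun x => by rw [Real.norm_eq_abs]
    have hnorm_f : ∀ x, ‖f x‖ ^ p = |f x| ^ p := fun x => by rw [Real.norm_eq_abs]
    simp only [← hp, hnorm_g, hnorm_f]
    have hfnn : 0 ≤ ∫ x, |f x| ^ p ∂π :=
      integral_nonneg fun x => Real.rpow_nonneg (abs_nonneg _) p
    have hgnn : 0 ≤ ∫ x, |g x| ^ p ∂π :=
      integral_nonneg fun x => Real.rpow_nonneg (abs_nonneg _) p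
    have hDnn : (0:ℝ) ≤ 2 ^ |p - 2| := by positivity
    have hexp : |p - 2| * p⁻¹ = |2 / p - 1| := by
      have h1 : 2 / p - 1 = (2 - p) / p := by field_simp
      rw [h1, abs_div, abs_of_pos hp0, abs_sub_comm]
      ring
    calc (∫ x, |g x| ^ p ∂π) ^ p⁻¹ ≤ (2 ^ |p - 2| * ∫ x, |f x| ^ p ∂π) ^ p⁻¹ :=
          Real.rpow_le_rpow hgnn key_int (by positivity)
      _ = (2 ^ |p - 2|) ^ p⁻¹ * (∫ x, |f x| ^ p ∂π) ^ p⁻¹ :=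
          Real.mul_rpow hDnn hfnn
      _ = 2 ^ |2 / p - 1| * (∫ x, |f x| ^ p ∂π) ^ p⁻¹ := by
          rw [← Real.rpow_mul (by norm_num : (0:ℝ) ≤ 2), hexp]
end

section
/- Bernoulli random variables in the cone: Let 1 ≤ p < q ≤ ∞ and K ≥ 1. Let Y be a Bernoulli random variable with P(Y = 0) = 1 − a and P(Y = 1) = a for some a ∈ (0, 1/2]. If a ≥ K^{−pq/(q−p)} (where for q = ∞ the exponent pq/(q−p) is read as p) or a = 1/2, then Y ∈ 𝒴_{p,q,K}. -/
open MeasureTheory ENNReal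

/-- The exponent `pq/(q-p)` (computed via real values), read as `p` when `q = ∞`. -/
noncomputable def coneExponent (p q : ℝ≥0∞) : ℝ :=
  if q = ∞ then p.toReal else p.toReal * q.toReal / (q.toReal - p.toReal)

/-- **Bernoulli random variables in the cone** (Lemma 3.8): let `1 ≤ p < q ≤ ∞`
and `K ≥ 1`, and let `Y` be a Bernoulli random variable with `P(Y = 0) = 1 - a`,
`P(Y = 1) = a` for some `a ∈ (0, 1/2]`. If `a ≥ K^(-pq/(q-p))` (exponent read as
`p` for `q = ∞`) or `a = 1/2`, then `Y ∈ 𝒴_{p,q,K}`, i.e. `Y ∈ L_q` and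
`‖Y - E Y‖_q ≤ K * ‖Y - E Y‖_p`. -/
theorem bernoulli_mem_cone
    {Ω : Type*} [MeasurableSpace Ω] (μ : Measure Ω) [IsProbabilityMeasure μ]
    (p q : ℝ≥0∞) (hp : 1 ≤ p) (hpq : p < q) (K : ℝ) (hK : 1 ≤ K)
    (a : ℝ) (ha0 : 0 < a) (ha1 : a ≤ 1 / 2)
    (Y : Ω → ℝ) (hYmeas : Measurable Y)
    (h0 : μ {ω | Y ω = 0} = ENNReal.ofReal (1 - a))
    (h1 : μ {ω | Y ω = 1} = ENNReal.ofReal a)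
    (hcond : K ^ (-coneExponent p q) ≤ a ∨ a = 1 / 2) :
    MemLp Y q μ ∧
      eLpNorm (fun ω => Y ω - ∫ ω', Y ω' ∂μ) q μ
        ≤ ENNReal.ofReal K * eLpNorm (fun ω => Y ω - ∫ ω', Y ω' ∂μ) p μ := by
  have hK0 : (0:ℝ) < K := lt_of_lt_of_le one_pos hK
  have ha1' : a ≤ 1 - a := by linarith
  have hb0 : (0:ℝ) < 1 - a := by linarith
  have h0meas : MeasurableSet {ω | Y ω = 0} := hYmeas (measurableSet_singleton 0)
  have h1meas : MeasurableSet {ω | Y ω = 1} := hYmeas (measurableSet_singleton 1)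
  have hdisj : Disjoint {ω | Y ω = 0} {ω | Y ω = 1} := by
    rw [Set.disjoint_left]
    intro ω hω0 hω1
    simp only [Set.mem_setOf_eq] at hω0 hω1
    rw [hω0] at hω1; norm_num at hω1
  have hS : μ ({ω | Y ω = 0} ∪ {ω | Y ω = 1}) = 1 := by
    rw [measure_union hdisj h1meas, h0, h1, ← ENNReal.ofReal_add (by linarith) ha0.le]
    norm_num
  have hae : ∀ᵐ ω ∂μ, Y ω = 0 ∨ Y ω = 1 := by
    have hc : μ ({ω | Y ω = 0} ∪ {ω | Y ω = 1})ᶜ = 0 := by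
      rw [prob_compl_eq_zero_iff (h0meas.union h1meas)]; exact hS
    rw [ae_iff]
    refine measure_mono_null (fun ω hω => ?_) hc
    simp only [Set.mem_setOf_eq] at hω
    simp only [Set.mem_compl_iff, Set.mem_union, Set.mem_setOf_eq]
    exact hω
  -- the mean is `a`
  have hYind : Y =ᵐ[μ] ({ω | Y ω = 1}).indicator (fun _ => (1:ℝ)) := by
    filter_upwards [hae] with ω hω
    rcases hω with h | h
    · rw [Set.indicator_of_notMem]
      · exact h
      · simp only [Set.mem_setOf_eq, h]; norm_num
    · rw [Set.indicator_of_mem]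
      · exact h
      · exact h
  have hm : ∫ ω', Y ω' ∂μ = a := by
    rw [integral_congr_ae hYind, integral_indicator_const _ h1meas, measureReal_def, h1,
      ENNReal.toReal_ofReal ha0.le, smul_eq_mul, mul_one]
  rw [hm]
  set g : Ω → ℝ := fun ω => Y ω - a with hgdef
  have hgmeas : Measurable g := hYmeas.sub measurable_const
  have hg : ∀ᵐ ω ∂μ, ‖g ω‖ ≤ 1 - a := by
    filter_upwards [hae] with ω hω
    rcases hω with h | h <;> simp only [hgdef, h, Real.norm_eq_abs]
    · rw [zero_sub, abs_neg, abs_of_nonneg ha0.le]; exact ha1'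
    · rw [abs_of_nonneg hb0.le]
  have hub : ∀ᵐ ω ∂μ, (‖g ω‖₊ : ℝ≥0∞) ≤ ENNReal.ofReal (1 - a) := by
    filter_upwards [hg] with ω hω
    rw [show (‖g ω‖₊ : ℝ≥0∞) = ENNReal.ofReal ‖g ω‖ from (ofReal_norm (g ω)).symm]
    exact ENNReal.ofReal_le_ofReal hω
  -- membership
  have hmem : MemLp Y q μ := by
    refine MemLp.of_bound hYmeas.aestronglyMeasurable 1 ?_
    filter_upwards [hae] with ω hω
    rcases hω with h | h <;> rw [h] <;> norm_num
  refine ⟨hmem, ?_⟩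
  -- notations
  set b : ℝ≥0∞ := ENNReal.ofReal (1 - a) with hbdef
  set c : ℝ≥0∞ := ENNReal.ofReal a with hcdef
  have hbne0 : b ≠ 0 := (ENNReal.ofReal_pos.2 hb0).ne'
  have hbnetop : b ≠ ∞ := ENNReal.ofReal_ne_top
  have hcne0 : c ≠ 0 := (ENNReal.ofReal_pos.2 ha0).ne'
  have hcnetop : c ≠ ∞ := ENNReal.ofReal_ne_top
  -- lower bound on lintegral of |g|^t
  have Ilow : ∀ t : ℝ, b ^ t * c ≤ ∫⁻ ω, (‖g ω‖₊ : ℝ≥0∞) ^ t ∂μ := by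
    intro t
    have hset : ∫⁻ ω in {ω | Y ω = 1}, (‖g ω‖₊ : ℝ≥0∞) ^ t ∂μ = b ^ t * c := by
      rw [setLIntegral_congr_fun_ae h1meas (ae_of_all _ (fun ω hω => ?_)), setLIntegral_const, h1]
      have : Y ω = 1 := hω
      simp only [hgdef, this]
      rw [← enorm_eq_nnnorm, Real.enorm_eq_ofReal hb0.le]
    rw [← hset]
    exact setLIntegral_le_lintegral _ _
  -- upper bound on lintegral of |g|^t
  have Iup : ∀ t : ℝ, 0 ≤ t → ∫⁻ ω, (‖g ω‖₊ : ℝ≥0∞) ^ t ∂μ ≤ b ^ t := by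
    intro t ht
    calc ∫⁻ ω, (‖g ω‖₊ : ℝ≥0∞) ^ t ∂μ ≤ ∫⁻ _, b ^ t ∂μ := by
          refine lintegral_mono_ae ?_
          filter_upwards [hub] with ω hω
          exact ENNReal.rpow_le_rpow hω ht
      _ = b ^ t := by simp
  have hp0 : p ≠ 0 := fun h => by simp [h] at hp
  have hq0 : q ≠ 0 := fun h => by rw [h] at hpq; exact (not_lt_of_ge (zero_le))  hpq
  have hpnetop : p ≠ ∞ := (lt_of_lt_of_le hpq le_top).ne
  set t : ℝ := p.toReal with htdef
  have ht1 : 1 ≤ t := by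
    rw [htdef, ← ENNReal.toReal_one]
    exact ENNReal.toReal_mono hpnetop hp
  have ht0 : 0 < t := lt_of_lt_of_le one_pos ht1
  -- the p-norm in terms of the lintegral
  have hIp := Ilow t
  set Ip : ℝ≥0∞ := ∫⁻ ω, (‖g ω‖₊ : ℝ≥0∞) ^ t ∂μ with hIpdef
  have hIpne0 : Ip ≠ 0 :=
    (lt_of_lt_of_le (ENNReal.mul_pos (ENNReal.rpow_pos hbne0.bot_lt hbnetop).ne' hcne0) hIp).ne'
  have hIpnetop : Ip ≠ ∞ :=
    (lt_of_le_of_lt (Iup t ht0.le) (ENNReal.rpow_lt_top_of_nonneg ht0.le hbnetop)).ne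
  have hpnorm : eLpNorm g p μ = Ip ^ (1 / t) := by
    rw [eLpNorm_eq_lintegral_rpow_enorm_toReal hp0 hpnetop]
    rfl
  -- case a = 1/2 : |g| = 1/2 a.e.
  rcases hcond with hcond | hcond
  swap
  · have habs : (fun ω => ‖g ω‖) =ᵐ[μ] (fun _ => (1/2 : ℝ)) := by
      filter_upwards [hae] with ω hω
      rcases hω with h | h <;> simp only [hgdef, h, hcond, Real.norm_eq_abs] <;> norm_num
    have hnorm : ∀ r : ℝ≥0∞, r ≠ 0 → eLpNorm g r μ = ‖(1/2 : ℝ)‖₊ := by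
      intro r hr
      rw [← eLpNorm_norm, eLpNorm_congr_ae habs,
        eLpNorm_const _ hr (IsProbabilityMeasure.ne_zero μ)]
      simp [enorm_eq_nnnorm]
    rw [hnorm q hq0, hnorm p hp0]
    exact le_mul_of_one_le_left (zero_le) (by rwa [ENNReal.one_le_ofReal])
  -- main case
  by_cases hqtop : q = ∞
  · -- q = ∞
    have hcond' : K ^ (-t) ≤ a := by
      rwa [coneExponent, if_pos hqtop] at hcond
    rw [hqtop, eLpNorm_exponent_top, hpnorm]
    have h1 : eLpNormEssSup g μ ≤ b := eLpNormEssSup_le_of_ae_bound hg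
    have h2 : b * c ^ (1/t) ≤ Ip ^ (1/t) := by
      calc b * c ^ (1/t) = (b ^ t * c) ^ (1/t) := by
            rw [ENNReal.mul_rpow_of_nonneg _ _ (by positivity), ← ENNReal.rpow_mul,
              mul_one_div, div_self ht0.ne', ENNReal.rpow_one]
        _ ≤ Ip ^ (1/t) := ENNReal.rpow_le_rpow hIp (by positivity)
    have hKc : (1 : ℝ≥0∞) ≤ ENNReal.ofReal K * c ^ (1/t) := by
      have hreal : (1:ℝ) ≤ K * a ^ (1/t) := by
        have : (K ^ (-t)) ^ (1/t) ≤ a ^ (1/t) :=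
          Real.rpow_le_rpow (Real.rpow_nonneg hK0.le _) hcond' (by positivity)
        rw [← Real.rpow_mul hK0.le, neg_mul, mul_one_div, div_self ht0.ne'] at this
        calc (1:ℝ) = K * K ^ (-(1:ℝ)) := by
              rw [Real.rpow_neg_one, mul_inv_cancel₀ hK0.ne']
          _ ≤ K * a ^ (1/t) := by
              exact mul_le_mul_of_nonneg_left this hK0.le
      calc (1 : ℝ≥0∞) = ENNReal.ofReal 1 := by simp
        _ ≤ ENNReal.ofReal (K * a ^ (1/t)) := ENNReal.ofReal_le_ofReal hreal
        _ = ENNReal.ofReal K * c ^ (1/t) := by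
            rw [ENNReal.ofReal_mul hK0.le, hcdef, ENNReal.ofReal_rpow_of_pos ha0]
    calc eLpNormEssSup g μ ≤ b := h1
      _ = 1 * b := (one_mul b).symm
      _ ≤ (ENNReal.ofReal K * c ^ (1/t)) * b := by
          exact mul_le_mul_left hKc b
      _ = ENNReal.ofReal K * (b * c ^ (1/t)) := by ring
      _ ≤ ENNReal.ofReal K * Ip ^ (1/t) := mul_le_mul_right h2 _
  · -- q < ∞
    set s : ℝ := q.toReal with hsdef
    have hts : t < s := (ENNReal.toReal_lt_toReal hpnetop hqtop).2 hpq
    have hs0 : 0 < s := lt_trans ht0 hts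
    have hst0 : (0:ℝ) < s - t := by linarith
    have hcond' : K ^ (-(t * s / (s - t))) ≤ a := by
      rwa [coneExponent, if_neg hqtop] at hcond
    rw [eLpNorm_eq_lintegral_rpow_enorm_toReal hq0 hqtop, ← hsdef, hpnorm]
    set Iq : ℝ≥0∞ := ∫⁻ ω, (‖g ω‖₊ : ℝ≥0∞) ^ s ∂μ with hIqdef
    have hIq : Iq ≤ b ^ (s - t) * Ip := by
      have hpt : ∀ᵐ ω ∂μ, (‖g ω‖₊ : ℝ≥0∞) ^ s ≤ b ^ (s - t) * (‖g ω‖₊ : ℝ≥0∞) ^ t := by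
        filter_upwards [hub] with ω hω
        have : (‖g ω‖₊ : ℝ≥0∞) ^ s = (‖g ω‖₊ : ℝ≥0∞) ^ (s - t) * (‖g ω‖₊ : ℝ≥0∞) ^ t := by
          rw [← ENNReal.rpow_add_of_nonneg _ _ hst0.le ht0.le, sub_add_cancel]
        rw [this]
        exact mul_le_mul_left (ENNReal.rpow_le_rpow hω hst0.le) _
      calc Iq ≤ ∫⁻ ω, b ^ (s - t) * (‖g ω‖₊ : ℝ≥0∞) ^ t ∂μ := lintegral_mono_ae hpt
        _ = b ^ (s - t) * Ip := lintegral_const_mul' _ _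
            (ENNReal.rpow_lt_top_of_nonneg hst0.le hbnetop).ne
    -- key : 1 ≤ K^s * a^((s-t)/t)
    have hKc : (1 : ℝ≥0∞) ≤ ENNReal.ofReal K ^ s * c ^ ((s - t)/t) := by
      have hreal : (1:ℝ) ≤ K ^ s * a ^ ((s - t)/t) := by
        have h3 : (K ^ (-(t * s / (s - t)))) ^ ((s - t)/t) ≤ a ^ ((s - t)/t) :=
          Real.rpow_le_rpow (Real.rpow_nonneg hK0.le _) hcond' (by positivity)
        rw [← Real.rpow_mul hK0.le] at h3
        have hexp : -(t * s / (s - t)) * ((s - t)/t) = -s := by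
          field_simp
        rw [hexp] at h3
        calc (1:ℝ) = K ^ s * K ^ (-s) := by
              rw [← Real.rpow_add hK0, add_neg_cancel, Real.rpow_zero]
          _ ≤ K ^ s * a ^ ((s - t)/t) :=
              mul_le_mul_of_nonneg_left h3 (Real.rpow_nonneg hK0.le _)
      calc (1 : ℝ≥0∞) = ENNReal.ofReal 1 := by simp
        _ ≤ ENNReal.ofReal (K ^ s * a ^ ((s - t)/t)) := ENNReal.ofReal_le_ofReal hreal
        _ = ENNReal.ofReal K ^ s * c ^ ((s - t)/t) := by
            rw [ENNReal.ofReal_mul (Real.rpow_nonneg hK0.le _), hcdef,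
              ENNReal.ofReal_rpow_of_pos ha0, ENNReal.ofReal_rpow_of_pos hK0]
    have hmain : Iq ≤ ENNReal.ofReal K ^ s * Ip ^ (s/t) := by
      have hIpexp : Ip ^ (s/t) = Ip ^ ((s - t)/t) * Ip := by
        rw [show s/t = (s - t)/t + 1 by field_simp; ring,
          ENNReal.rpow_add _ _ hIpne0 hIpnetop, ENNReal.rpow_one]
      have hIpl : b ^ (s - t) * c ^ ((s - t)/t) ≤ Ip ^ ((s - t)/t) := by
        calc b ^ (s - t) * c ^ ((s - t)/t) = (b ^ t * c) ^ ((s - t)/t) := by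
              rw [ENNReal.mul_rpow_of_nonneg _ _ (by positivity), ← ENNReal.rpow_mul]
              congr 2
              field_simp
          _ ≤ Ip ^ ((s - t)/t) := ENNReal.rpow_le_rpow hIp (by positivity)
      calc Iq ≤ b ^ (s - t) * Ip := hIq
        _ = 1 * (b ^ (s - t) * Ip) := (one_mul _).symm
        _ ≤ (ENNReal.ofReal K ^ s * c ^ ((s - t)/t)) * (b ^ (s - t) * Ip) :=
            mul_le_mul_left hKc _
        _ = ENNReal.ofReal K ^ s * ((b ^ (s - t) * c ^ ((s - t)/t)) * Ip) := by ring
        _ ≤ ENNReal.ofReal K ^ s * (Ip ^ ((s - t)/t) * Ip) :=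
            mul_le_mul_right (mul_le_mul_left hIpl _) _
        _ = ENNReal.ofReal K ^ s * Ip ^ (s/t) := by rw [hIpexp]
    calc Iq ^ (1/s) ≤ (ENNReal.ofReal K ^ s * Ip ^ (s/t)) ^ (1/s) :=
          ENNReal.rpow_le_rpow hmain (by positivity)
      _ = ENNReal.ofReal K * Ip ^ (1/t) := by
          have e1 : s * (1/s) = 1 := by field_simp
          have e2 : s/t * (1/s) = 1/t := by
            field_simp
          rw [ENNReal.mul_rpow_of_nonneg _ _ (by positivity), ← ENNReal.rpow_mul,
            ← ENNReal.rpow_mul, e1, e2, ENNReal.rpow_one]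
end
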